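/- Let D(X), D(Y) ⊆ ℝ⁺, let f : D(Y) → D(X) be an increasing bijection and let t ∈ D(Y). Then f is continuous at t (as a map between D(Y) and D(X) with their subspace topologies) and f⁻¹ is continuous at f(t) if and only if both of the following equivalences hold: (t ∈ ac([t,∞) ∩ D(Y))) ⇔ (f(t) ∈ ac([f(t),∞) ∩ D(X))), and (t ∈ ac([0,t] ∩ D(Y))) ⇔ (f(t) ∈ ac([0,f(t)] ∩ D(X))). -/

import Mathlib

open Filter Topology

private lemma accR_iff (t : ℝ) (D : Set ℝ) :
    AccPt t (𝓟 (Set.Ici t ∩ D)) ↔ (𝓝[Set.Ioi t ∩ D] t).NeBot := by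
  rw [accPt_principal_iff_clusterPt]
  have : (Set.Ici t ∩ D) \ {t} = Set.Ioi t ∩ D := by
    ext x; simp [lt_iff_le_and_ne, and_comm, eq_comm, and_assoc]
  rw [this]; exact Iff.rfl

private lemma accL_iff (t : ℝ) (D : Set ℝ) (hD : D ⊆ Set.Ici 0) :
    AccPt t (𝓟 (Set.Icc 0 t ∩ D)) ↔ (𝓝[Set.Iio t ∩ D] t).NeBot := by
  rw [accPt_principal_iff_clusterPt]
  have : (Set.Icc 0 t ∩ D) \ {t} = Set.Iio t ∩ D := by
    ext x
    simp only [Set.mem_diff, Set.mem_inter_iff, Set.mem_Icc, Set.mem_singleton_iff, Set.mem_Iio]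
    constructor
    · rintro ⟨⟨⟨_, hxt⟩, hx⟩, hne⟩; exact ⟨lt_of_le_of_ne hxt hne, hx⟩
    · rintro ⟨hlt, hx⟩; exact ⟨⟨⟨hD hx, hlt.le⟩, hx⟩, ne_of_lt hlt⟩
  rw [this]; exact Iff.rfl

/-- forward, right side -/
private lemma fwdR (D E : Set ℝ) (f : ℝ → ℝ) (hmono : StrictMonoOn f D)
    (hmaps : Set.MapsTo f D E) (t : ℝ) (ht : t ∈ D)
    (hf : ContinuousWithinAt f D t)
    (h : (𝓝[Set.Ioi t ∩ D] t).NeBot) : (𝓝[Set.Ioi (f t) ∩ E] (f t)).NeBot := by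
  have h1 : Tendsto f (𝓝[Set.Ioi t ∩ D] t) (𝓝 (f t)) :=
    hf.mono (Set.inter_subset_right)
  have h2 : ∀ᶠ y in 𝓝[Set.Ioi t ∩ D] t, f y ∈ Set.Ioi (f t) ∩ E := by
    filter_upwards [self_mem_nhdsWithin] with y hy
    exact ⟨hmono ht hy.2 hy.1, hmaps hy.2⟩
  have h3 : Tendsto f (𝓝[Set.Ioi t ∩ D] t) (𝓝[Set.Ioi (f t) ∩ E] (f t)) :=
    tendsto_nhdsWithin_iff.2 ⟨h1, h2⟩
  exact h3.neBot

/-- forward, left side -/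
private lemma fwdL (D E : Set ℝ) (f : ℝ → ℝ) (hmono : StrictMonoOn f D)
    (hmaps : Set.MapsTo f D E) (t : ℝ) (ht : t ∈ D)
    (hf : ContinuousWithinAt f D t)
    (h : (𝓝[Set.Iio t ∩ D] t).NeBot) : (𝓝[Set.Iio (f t) ∩ E] (f t)).NeBot := by
  have h1 : Tendsto f (𝓝[Set.Iio t ∩ D] t) (𝓝 (f t)) :=
    hf.mono (Set.inter_subset_right)
  have h2 : ∀ᶠ y in 𝓝[Set.Iio t ∩ D] t, f y ∈ Set.Iio (f t) ∩ E := by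
    filter_upwards [self_mem_nhdsWithin] with y hy
    exact ⟨hmono hy.2 ht hy.1, hmaps hy.2⟩
  have h3 : Tendsto f (𝓝[Set.Iio t ∩ D] t) (𝓝[Set.Iio (f t) ∩ E] (f t)) :=
    tendsto_nhdsWithin_iff.2 ⟨h1, h2⟩
  exact h3.neBot

/-- backward, right-continuity -/
private lemma bwdR (D E : Set ℝ) (f g : ℝ → ℝ) (hmono : StrictMonoOn f D)
    (hmemg : ∀ s ∈ E, g s ∈ D) (hfg : ∀ s ∈ E, f (g s) = s)
    (t : ℝ) (ht : t ∈ D)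
    (hR : (𝓝[Set.Ioi t ∩ D] t).NeBot → (𝓝[Set.Ioi (f t) ∩ E] (f t)).NeBot) :
    Tendsto f (𝓝[Set.Ioi t ∩ D] t) (𝓝 (f t)) := by
  by_cases hN : (𝓝[Set.Ioi t ∩ D] t).NeBot
  · have hE := hR hN
    rw [Metric.tendsto_nhds]
    intro ε hε
    have hcl : f t ∈ closure (Set.Ioi (f t) ∩ E) :=
      mem_closure_iff_nhdsWithin_neBot.2 hE
    obtain ⟨s, hs, hds⟩ := Metric.mem_closure_iff.1 hcl ε hε
    have hsu : f t < s := hs.1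
    have hsE : s ∈ E := hs.2
    have hsε : s < f t + ε := by
      have := abs_lt.1 (by rwa [Real.dist_eq] at hds)
      linarith [this.2]
    set y' := g s with hy'
    have hy'D : y' ∈ D := hmemg s hsE
    have hfy' : f y' = s := hfg s hsE
    have hty' : t < y' := by
      by_contra hle
      push_neg at hle
      rcases lt_or_eq_of_le hle with h' | h'
      · exact absurd (hfy' ▸ hmono hy'D ht h') (not_lt.2 hsu.le)
      · rw [← h', hfy'] at hsu; exact lt_irrefl _ hsu
    have hIio : Set.Iio y' ∈ 𝓝[Set.Ioi t ∩ D] t :=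
      nhdsWithin_le_nhds (Iio_mem_nhds hty')
    filter_upwards [hIio, self_mem_nhdsWithin] with y hy1 hy2
    have h1 : f t < f y := hmono ht hy2.2 hy2.1
    have h2 : f y < s := hfy' ▸ hmono hy2.2 hy'D hy1
    rw [Real.dist_eq, abs_lt]; constructor <;> linarith
  · rw [not_neBot] at hN
    rw [hN]; exact tendsto_bot

/-- backward, left-continuity -/
private lemma bwdL (D E : Set ℝ) (f g : ℝ → ℝ) (hmono : StrictMonoOn f D)
    (hmemg : ∀ s ∈ E, g s ∈ D) (hfg : ∀ s ∈ E, f (g s) = s)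
    (t : ℝ) (ht : t ∈ D)
    (hL : (𝓝[Set.Iio t ∩ D] t).NeBot → (𝓝[Set.Iio (f t) ∩ E] (f t)).NeBot) :
    Tendsto f (𝓝[Set.Iio t ∩ D] t) (𝓝 (f t)) := by
  by_cases hN : (𝓝[Set.Iio t ∩ D] t).NeBot
  · have hE := hL hN
    rw [Metric.tendsto_nhds]
    intro ε hε
    have hcl : f t ∈ closure (Set.Iio (f t) ∩ E) :=
      mem_closure_iff_nhdsWithin_neBot.2 hE
    obtain ⟨s, hs, hds⟩ := Metric.mem_closure_iff.1 hcl ε hε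
    have hsu : s < f t := hs.1
    have hsE : s ∈ E := hs.2
    have hsε : f t - ε < s := by
      have := abs_lt.1 (by rwa [Real.dist_eq] at hds)
      linarith [this.1]
    set y' := g s with hy'
    have hy'D : y' ∈ D := hmemg s hsE
    have hfy' : f y' = s := hfg s hsE
    have hty' : y' < t := by
      by_contra hle
      push_neg at hle
      rcases lt_or_eq_of_le hle with h' | h'
      · exact absurd (hfy' ▸ hmono ht hy'D h') (not_lt.2 hsu.le)
      · rw [h', hfy'] at hsu; exact lt_irrefl _ hsu
    have hIoi : Set.Ioi y' ∈ 𝓝[Set.Iio t ∩ D] t :=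
      nhdsWithin_le_nhds (Ioi_mem_nhds hty')
    filter_upwards [hIoi, self_mem_nhdsWithin] with y hy1 hy2
    have h1 : f y < f t := hmono hy2.2 ht hy2.1
    have h2 : s < f y := hfy' ▸ hmono hy'D hy2.2 hy1
    rw [Real.dist_eq, abs_lt]; constructor <;> linarith
  · rw [not_neBot] at hN
    rw [hN]; exact tendsto_bot

/-- combine left and right into ContinuousWithinAt -/
private lemma combine (D : Set ℝ) (f : ℝ → ℝ) (t : ℝ)
    (hR : Tendsto f (𝓝[Set.Ioi t ∩ D] t) (𝓝 (f t)))
    (hL : Tendsto f (𝓝[Set.Iio t ∩ D] t) (𝓝 (f t))) :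
    ContinuousWithinAt f D t := by
  have hsub : D ⊆ (Set.Iio t ∩ D) ∪ ((Set.Ioi t ∩ D) ∪ {t}) := by
    intro x hx
    rcases lt_trichotomy x t with h | h | h
    · exact Or.inl ⟨h, hx⟩
    · exact Or.inr (Or.inr h)
    · exact Or.inr (Or.inl ⟨h, hx⟩)
  have : ContinuousWithinAt f ((Set.Iio t ∩ D) ∪ ((Set.Ioi t ∩ D) ∪ {t})) t := by
    unfold ContinuousWithinAt
    rw [nhdsWithin_union, nhdsWithin_union, nhdsWithin_singleton]
    rw [tendsto_sup]
    exact ⟨hL, tendsto_sup.2 ⟨hR, tendsto_pure_nhds f t⟩⟩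
  exact this.mono hsub

theorem stmt5 (DX DY : Set ℝ) (hDX : DX ⊆ Set.Ici 0) (hDY : DY ⊆ Set.Ici 0)
    (f g : ℝ → ℝ)
    (hmono : StrictMonoOn f DY) (hbij : Set.BijOn f DY DX)
    (hgf : ∀ t ∈ DY, g (f t) = t) (hfg : ∀ s ∈ DX, f (g s) = s)
    (t : ℝ) (ht : t ∈ DY) :
    (ContinuousWithinAt f DY t ∧ ContinuousWithinAt g DX (f t)) ↔
      ((AccPt t (𝓟 (Set.Ici t ∩ DY)) ↔ AccPt (f t) (𝓟 (Set.Ici (f t) ∩ DX))) ∧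
       (AccPt t (𝓟 (Set.Icc 0 t ∩ DY)) ↔ AccPt (f t) (𝓟 (Set.Icc 0 (f t) ∩ DX)))) := by
  have hmemg : ∀ s ∈ DX, g s ∈ DY := by
    intro s hs
    obtain ⟨y, hy, hfy⟩ := hbij.surjOn hs
    rw [← hfy, hgf y hy]; exact hy
  have hgmono : StrictMonoOn g DX := by
    intro s1 h1 s2 h2 h12
    by_contra hle
    push_neg at hle
    rcases lt_or_eq_of_le hle with h' | h'
    · have := hmono (hmemg s2 h2) (hmemg s1 h1) h'
      rw [hfg s1 h1, hfg s2 h2] at this; exact absurd h12 (not_lt.2 this.le)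
    · have : s2 = s1 := by rw [← hfg s2 h2, ← hfg s1 h1, h']
      rw [this] at h12; exact lt_irrefl _ h12
  have hut : g (f t) = t := hgf t ht
  have huX : f t ∈ DX := hbij.mapsTo ht
  rw [accR_iff, accR_iff, accL_iff t DY hDY, accL_iff (f t) DX hDX]
  constructor
  · rintro ⟨hfc, hgc⟩
    constructor
    · constructor
      · exact fwdR DY DX f hmono hbij.mapsTo t ht hfc
      · intro h
        have := fwdR DX DY g hgmono hmemg (f t) huX hgc h
        rwa [hut] at this
    · constructor
      · exact fwdL DY DX f hmono hbij.mapsTo t ht hfc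
      · intro h
        have := fwdL DX DY g hgmono hmemg (f t) huX hgc h
        rwa [hut] at this
  · rintro ⟨hRiff, hLiff⟩
    constructor
    · exact combine DY f t
        (bwdR DY DX f g hmono hmemg hfg t ht hRiff.mp)
        (bwdL DY DX f g hmono hmemg hfg t ht hLiff.mp)
    · have hc : ContinuousWithinAt g DX (f t) := by
        apply combine DX g (f t)
        · have := bwdR DX DY g f hgmono hbij.mapsTo hgf (f t) huX
            (by rw [hut]; exact hRiff.mpr)
          exact this
        · have := bwdL DX DY g f hgmono hbij.mapsTo hgf (f t) huX
            (by rw [hut]; exact hLiff.mpr)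
          exact this
      exact hc
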